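/- Let f : [n]^d → ℝ and fix a dimension i. Suppose there are no violations along the i-lines, that is, every pair (x,y) with x_j = y_j for all j ≠ i is not violated. Then there exists a matching M of the violation graph G_f whose weight vs_f(M) equals the maximum weight over all matchings of G_f, and which contains no i-cross pairs, i.e., every pair {x,y} ∈ M satisfies x_i = y_i. -/
import Mathlib


open Finset

/-- Membership of a point in the hypergrid `[n]^d = {1,…,n}^d`. -/
def inGrid (n d : ℕ) (x : Fin d → ℕ) : Prop := ∀ r : Fin d, 1 ≤ x r ∧ x r ≤ n

/-- The quasimetric associated to a bounding family `(l, u)`. -/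
def qm (d : ℕ) (l u : Fin d → ℕ → ℝ) (x y : Fin d → ℕ) : ℝ :=
  ∑ r : Fin d, ((∑ t ∈ Finset.Ico (y r) (x r), u r t) - ∑ t ∈ Finset.Ico (x r) (y r), l r t)

/-- The violation score of a pair `(x,y)` for the function `f`. -/
def vs (d : ℕ) (l u : Fin d → ℕ → ℝ) (f : (Fin d → ℕ) → ℝ) (x y : Fin d → ℕ) : ℝ :=
  max (f x - f y - qm d l u x y) (f y - f x - qm d l u y x)

/-- A matching of the violation graph `G_f`: a finite set of violated pairs of
grid points in which each point of the hypergrid occurs at most once. -/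
def IsMatching (n d : ℕ) (l u : Fin d → ℕ → ℝ) (f : (Fin d → ℕ) → ℝ)
    (M : Finset ((Fin d → ℕ) × (Fin d → ℕ))) : Prop :=
  (∀ p ∈ M, inGrid n d p.1 ∧ inGrid n d p.2 ∧ p.1 ≠ p.2 ∧ 0 < vs d l u f p.1 p.2) ∧
  (∀ p ∈ M, ∀ p' ∈ M, p ≠ p' →
    p.1 ≠ p'.1 ∧ p.1 ≠ p'.2 ∧ p.2 ≠ p'.1 ∧ p.2 ≠ p'.2)

namespace S12

variable {n d : ℕ} {l u : Fin d → ℕ → ℝ} {f : (Fin d → ℕ) → ℝ} {i : Fin d}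

/-- one-dimensional cost of moving from `a` to `b` in coordinate `r`. -/
noncomputable def cost (l u : Fin d → ℕ → ℝ) (r : Fin d) (a b : ℕ) : ℝ :=
  (∑ t ∈ Finset.Ico b a, u r t) - ∑ t ∈ Finset.Ico a b, l r t

lemma qm_eq_cost (x y : Fin d → ℕ) : qm d l u x y = ∑ r : Fin d, cost l u r (x r) (y r) := rfl

lemma cost_self (r : Fin d) (a : ℕ) : cost l u r a a = 0 := by
  simp [cost]


lemma sum_ul_nonneg (hlu : ∀ r : Fin d, ∀ t : ℕ, 1 ≤ t → t + 1 ≤ n → l r t < u r t)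
    (r : Fin d) {p q : ℕ} (hp : 1 ≤ p) (hq : q ≤ n) :
    (∑ t ∈ Finset.Ico p q, l r t) ≤ ∑ t ∈ Finset.Ico p q, u r t := by
  apply Finset.sum_le_sum
  intro t ht
  rw [Finset.mem_Ico] at ht
  exact le_of_lt (hlu r t (le_trans hp ht.1) (Nat.succ_le_of_lt (lt_of_lt_of_le ht.2 hq)))

lemma cost_triangle (hlu : ∀ r : Fin d, ∀ t : ℕ, 1 ≤ t → t + 1 ≤ n → l r t < u r t)
    (r : Fin d) {a b c : ℕ} (ha1 : 1 ≤ a) (ha2 : a ≤ n)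
    (hb1 : 1 ≤ b) (hb2 : b ≤ n) (hc1 : 1 ≤ c) (hc2 : c ≤ n) :
    cost l u r a b ≤ cost l u r a c + cost l u r c b := by
  unfold cost
  rcases le_total a b with hab | hab
  · rcases le_total c a with h1 | h1
    · -- c ≤ a ≤ b
      rw [Finset.Ico_eq_empty (by omega : ¬ b < a), Finset.Ico_eq_empty (by omega : ¬ a < c),
        Finset.Ico_eq_empty (by omega : ¬ b < c)]
      have hL := Finset.sum_Ico_consecutive (l r) h1 hab
      have hN := sum_ul_nonneg hlu r (p := c) (q := a) hc1 ha2
      simp only [Finset.sum_empty]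
      linarith
    · rcases le_total c b with h2 | h2
      · -- a ≤ c ≤ b
        rw [Finset.Ico_eq_empty (by omega : ¬ b < a), Finset.Ico_eq_empty (by omega : ¬ c < a),
          Finset.Ico_eq_empty (by omega : ¬ b < c)]
        have hL := Finset.sum_Ico_consecutive (l r) h1 h2
        simp only [Finset.sum_empty]
        linarith
      · -- a ≤ b ≤ c
        rw [Finset.Ico_eq_empty (by omega : ¬ b < a), Finset.Ico_eq_empty (by omega : ¬ c < a),
          Finset.Ico_eq_empty (by omega : ¬ c < b)]
        have hL := Finset.sum_Ico_consecutive (l r) hab h2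
        have hN := sum_ul_nonneg hlu r (p := b) (q := c) hb1 hc2
        simp only [Finset.sum_empty]
        linarith
  · rcases le_total c b with h1 | h1
    · -- c ≤ b ≤ a
      rw [Finset.Ico_eq_empty (by omega : ¬ a < b), Finset.Ico_eq_empty (by omega : ¬ a < c),
        Finset.Ico_eq_empty (by omega : ¬ b < c)]
      have hU := Finset.sum_Ico_consecutive (u r) h1 hab
      have hN := sum_ul_nonneg hlu r (p := c) (q := b) hc1 hb2
      simp only [Finset.sum_empty]
      linarith
    · rcases le_total c a with h2 | h2
      · -- b ≤ c ≤ a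
        rw [Finset.Ico_eq_empty (by omega : ¬ a < b), Finset.Ico_eq_empty (by omega : ¬ a < c),
          Finset.Ico_eq_empty (by omega : ¬ c < b)]
        have hU := Finset.sum_Ico_consecutive (u r) h1 h2
        simp only [Finset.sum_empty]
        linarith
      · -- b ≤ a ≤ c
        rw [Finset.Ico_eq_empty (by omega : ¬ a < b), Finset.Ico_eq_empty (by omega : ¬ c < b),
          Finset.Ico_eq_empty (by omega : ¬ c < a)]
        have hU := Finset.sum_Ico_consecutive (u r) hab h2
        have hN := sum_ul_nonneg hlu r (p := a) (q := c) ha1 hc2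
        simp only [Finset.sum_empty]
        linarith

lemma qm_triangle (hlu : ∀ r : Fin d, ∀ t : ℕ, 1 ≤ t → t + 1 ≤ n → l r t < u r t)
    {x y z : Fin d → ℕ} (hx : inGrid n d x) (hy : inGrid n d y)
    (hz : inGrid n d z) : qm d l u x y ≤ qm d l u x z + qm d l u z y := by
  rw [qm_eq_cost, qm_eq_cost, qm_eq_cost, ← Finset.sum_add_distrib]
  apply Finset.sum_le_sum
  intro r _
  exact cost_triangle hlu r (hx r).1 (hx r).2 (hy r).1 (hy r).2 (hz r).1 (hz r).2

lemma cost_anti_nonneg (hlu : ∀ r : Fin d, ∀ t : ℕ, 1 ≤ t → t + 1 ≤ n → l r t < u r t)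
    (r : Fin d) {a b : ℕ} (ha1 : 1 ≤ a) (ha2 : a ≤ n)
    (hb1 : 1 ≤ b) (hb2 : b ≤ n) : 0 ≤ cost l u r a b + cost l u r b a := by
  unfold cost
  rcases le_total a b with h | h
  · rw [Finset.Ico_eq_empty (by omega : ¬ b < a)]
    have hN := sum_ul_nonneg hlu r (p := a) (q := b) ha1 hb2
    simp only [Finset.sum_empty]
    linarith
  · rw [Finset.Ico_eq_empty (by omega : ¬ a < b)]
    have hN := sum_ul_nonneg hlu r (p := b) (q := a) hb1 ha2
    simp only [Finset.sum_empty]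
    linarith

lemma qm_cycle_nonneg (hlu : ∀ r : Fin d, ∀ t : ℕ, 1 ≤ t → t + 1 ≤ n → l r t < u r t)
    {x y : Fin d → ℕ} (hx : inGrid n d x) (hy : inGrid n d y) :
    0 ≤ qm d l u x y + qm d l u y x := by
  rw [qm_eq_cost, qm_eq_cost, ← Finset.sum_add_distrib]
  apply Finset.sum_nonneg
  intro r _
  exact cost_anti_nonneg hlu r (hx r).1 (hx r).2 (hy r).1 (hy r).2



/-- exact decomposition: through the point obtained from `b` by setting coordinate `i`
to that of `a`. -/
lemma qm_dec1 (x y : Fin d → ℕ) :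
    qm d l u x y = qm d l u x (Function.update y i (x i)) +
      qm d l u (Function.update y i (x i)) y := by
  rw [qm_eq_cost, qm_eq_cost, qm_eq_cost, ← Finset.sum_add_distrib]
  apply Finset.sum_congr rfl
  intro r _
  by_cases h : r = i
  · subst h
    rw [Function.update_self, cost_self]
    ring
  · rw [Function.update_of_ne h, cost_self]
    ring

/-- exact decomposition: through the point obtained from `a` by setting coordinate `i`
to that of `b`. -/
lemma qm_dec2 (x y : Fin d → ℕ) :
    qm d l u x y = qm d l u x (Function.update x i (y i)) +
      qm d l u (Function.update x i (y i)) y := by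
  rw [qm_eq_cost, qm_eq_cost, qm_eq_cost, ← Finset.sum_add_distrib]
  apply Finset.sum_congr rfl
  intro r _
  by_cases h : r = i
  · subst h
    rw [Function.update_self, cost_self]
    ring
  · rw [Function.update_of_ne h, cost_self]
    ring

lemma grid_update {x : Fin d → ℕ} (hx : inGrid n d x) {c : ℕ} (hc1 : 1 ≤ c) (hc2 : c ≤ n) :
    inGrid n d (Function.update x i c) := by
  intro r
  by_cases h : r = i
  · subst h; rw [Function.update_self]; exact ⟨hc1, hc2⟩
  · rw [Function.update_of_ne h]; exact hx r

lemma update_update (x : Fin d → ℕ) (c : ℕ) :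
    Function.update (Function.update x i c) i (x i) = x := by
  funext j
  by_cases h : j = i
  · subst h; rw [Function.update_self]
  · rw [Function.update_of_ne h, Function.update_of_ne h]

/-! ### line pairs and violation score -/

lemma vs_comm (x y : Fin d → ℕ) : vs d l u f x y = vs d l u f y x := max_comm _ _

lemma le_vs (x y : Fin d → ℕ) : f x - f y - qm d l u x y ≤ vs d l u f x y := le_max_left _ _

lemma le_vs' (x y : Fin d → ℕ) : f y - f x - qm d l u y x ≤ vs d l u f x y := le_max_right _ _

lemma vs_eq_of_ge {x y : Fin d → ℕ}
    (h : f y - f x - qm d l u y x ≤ f x - f y - qm d l u x y) :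
    vs d l u f x y = f x - f y - qm d l u x y := max_eq_left h

/-- if one orientation of a pair has positive score, the other is nonpositive. -/
lemma other_nonpos (hlu : ∀ r : Fin d, ∀ t : ℕ, 1 ≤ t → t + 1 ≤ n → l r t < u r t)
    {x y : Fin d → ℕ} (hx : inGrid n d x) (hy : inGrid n d y)
    (h : 0 < f x - f y - qm d l u x y) : f y - f x - qm d l u y x < 0 := by
  have := qm_cycle_nonneg hlu hx hy
  linarith

section withf
variable (n l u f i)
variable (hno : ∀ x y : Fin d → ℕ, inGrid n d x → inGrid n d y →
      (∀ j : Fin d, j ≠ i → x j = y j) → vs d l u f x y ≤ 0)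

omit hno in
lemma line_pair_eq {x : Fin d → ℕ} (c : ℕ) (j : Fin d) (hj : j ≠ i) :
    Function.update x i c j = x j := Function.update_of_ne hj _ _

include hno in
/-- no violation along the line: downward bound. -/
lemma line1 {x : Fin d → ℕ} (hx : inGrid n d x) {c : ℕ} (hc1 : 1 ≤ c) (hc2 : c ≤ n) :
    f x - f (Function.update x i c) ≤ qm d l u x (Function.update x i c) := by
  have h := hno x (Function.update x i c) hx (grid_update hx hc1 hc2)
    (fun j hj => (line_pair_eq (i := i) c j hj).symm)
  have h1 := le_trans (le_vs (f := f) (l := l) (u := u) x (Function.update x i c)) h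
  linarith

include hno in
lemma line2 {x : Fin d → ℕ} (hx : inGrid n d x) {c : ℕ} (hc1 : 1 ≤ c) (hc2 : c ≤ n) :
    f (Function.update x i c) - f x ≤ qm d l u (Function.update x i c) x := by
  have h := hno x (Function.update x i c) hx (grid_update hx hc1 hc2)
    (fun j hj => (line_pair_eq (i := i) c j hj).symm)
  have h1 := le_trans (le_vs' (f := f) (l := l) (u := u) x (Function.update x i c)) h
  linarith

end withf

/-! ### matchings -/

/-- a point is used by a matching -/
def used (N : Finset ((Fin d → ℕ) × (Fin d → ℕ))) (v : Fin d → ℕ) : Prop :=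
  ∃ p ∈ N, p.1 = v ∨ p.2 = v

lemma used_mono {N N' : Finset ((Fin d → ℕ) × (Fin d → ℕ))} (h : N' ⊆ N) {v : Fin d → ℕ}
    (hv : used N' v) : used N v := by
  obtain ⟨p, hp, hpv⟩ := hv
  exact ⟨p, h hp, hpv⟩

lemma used_of_mem {N : Finset ((Fin d → ℕ) × (Fin d → ℕ))} {p} (hp : p ∈ N) :
    used N p.1 ∧ used N p.2 := ⟨⟨p, hp, Or.inl rfl⟩, ⟨p, hp, Or.inr rfl⟩⟩

lemma notMem_of_not_used {N : Finset ((Fin d → ℕ) × (Fin d → ℕ))} {q} (h : ¬ used N q.1) :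
    q ∉ N := fun hq => h ⟨q, hq, Or.inl rfl⟩

lemma notMem_of_not_used' {N : Finset ((Fin d → ℕ) × (Fin d → ℕ))} {q} (h : ¬ used N q.2) :
    q ∉ N := fun hq => h ⟨q, hq, Or.inr rfl⟩

lemma match_subset {n : ℕ} {N N' : Finset ((Fin d → ℕ) × (Fin d → ℕ))} (h : N' ⊆ N)
    (hM : IsMatching n d l u f N) : IsMatching n d l u f N' :=
  ⟨fun p hp => hM.1 p (h hp), fun p hp p' hp' hne => hM.2 p (h hp) p' (h hp') hne⟩

lemma match_insert {n : ℕ} {N : Finset ((Fin d → ℕ) × (Fin d → ℕ))}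
    (hM : IsMatching n d l u f N) {q : (Fin d → ℕ) × (Fin d → ℕ)}
    (hg1 : inGrid n d q.1) (hg2 : inGrid n d q.2) (hne : q.1 ≠ q.2)
    (hvs : 0 < vs d l u f q.1 q.2)
    (h1 : ¬ used N q.1) (h2 : ¬ used N q.2) : IsMatching n d l u f (insert q N) := by
  constructor
  · intro p hp
    rcases Finset.mem_insert.1 hp with rfl | hp
    · exact ⟨hg1, hg2, hne, hvs⟩
    · exact hM.1 p hp
  · intro p hp p' hp' hne'
    rcases Finset.mem_insert.1 hp with hpq | hpN
    · rcases Finset.mem_insert.1 hp' with hpq' | hpN'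
      · exact absurd (hpq.trans hpq'.symm) hne'
      · subst hpq
        exact ⟨fun hEq => h1 ⟨p', hpN', Or.inl hEq.symm⟩, fun hEq => h1 ⟨p', hpN', Or.inr hEq.symm⟩,
          fun hEq => h2 ⟨p', hpN', Or.inl hEq.symm⟩, fun hEq => h2 ⟨p', hpN', Or.inr hEq.symm⟩⟩
    · rcases Finset.mem_insert.1 hp' with hpq' | hpN'
      · subst hpq'
        exact ⟨fun hEq => h1 ⟨p, hpN, Or.inl hEq⟩, fun hEq => h2 ⟨p, hpN, Or.inl hEq⟩,
          fun hEq => h1 ⟨p, hpN, Or.inr hEq⟩, fun hEq => h2 ⟨p, hpN, Or.inr hEq⟩⟩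
      · exact hM.2 p hpN p' hpN' hne'

lemma used_insert {N : Finset ((Fin d → ℕ) × (Fin d → ℕ))} {q v} :
    used (insert q N) v ↔ q.1 = v ∨ q.2 = v ∨ used N v := by
  constructor
  · rintro ⟨p, hp, hpv⟩
    rcases Finset.mem_insert.1 hp with rfl | hp
    · tauto
    · exact Or.inr (Or.inr ⟨p, hp, hpv⟩)
  · rintro (h | h | ⟨p, hp, hpv⟩)
    · exact ⟨q, Finset.mem_insert_self _ _, Or.inl h⟩
    · exact ⟨q, Finset.mem_insert_self _ _, Or.inr h⟩
    · exact ⟨p, Finset.mem_insert_of_mem hp, hpv⟩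

lemma used_erase {n : ℕ} {N : Finset ((Fin d → ℕ) × (Fin d → ℕ))}
    (hM : IsMatching n d l u f N) {P : (Fin d → ℕ) × (Fin d → ℕ)} (hP : P ∈ N) {v : Fin d → ℕ}
    (hv : P.1 = v ∨ P.2 = v) : ¬ used (N.erase P) v := by
  rintro ⟨p, hp, hpv⟩
  have hpN := Finset.mem_of_mem_erase hp
  have hne : p ≠ P := Finset.ne_of_mem_erase hp
  have h4 := hM.2 p hpN P hP hne
  rcases hpv with h | h <;> rcases hv with h' | h'
  · exact h4.1 (h.trans h'.symm)
  · exact h4.2.1 (h.trans h'.symm)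
  · exact h4.2.2.1 (h.trans h'.symm)
  · exact h4.2.2.2 (h.trans h'.symm)

/-- total weight of a matching -/
noncomputable def W (l u : Fin d → ℕ → ℝ) (f : (Fin d → ℕ) → ℝ)
    (N : Finset ((Fin d → ℕ) × (Fin d → ℕ))) : ℝ := ∑ p ∈ N, vs d l u f p.1 p.2

lemma W_insert {N : Finset ((Fin d → ℕ) × (Fin d → ℕ))} {q} (h : q ∉ N) :
    W l u f (insert q N) = vs d l u f q.1 q.2 + W l u f N := Finset.sum_insert h

lemma W_erase {N : Finset ((Fin d → ℕ) × (Fin d → ℕ))} {P} (h : P ∈ N) :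
    W l u f N = vs d l u f P.1 P.2 + W l u f (N.erase P) := by
  rw [W, W, ← Finset.add_sum_erase _ _ h]


lemma qm_self (x : Fin d → ℕ) : qm d l u x x = 0 := by
  rw [qm_eq_cost]
  exact Finset.sum_eq_zero fun r _ => cost_self r (x r)

section core
variable {n : ℕ}
variable (hlu : ∀ r : Fin d, ∀ t : ℕ, 1 ≤ t → t + 1 ≤ n → l r t < u r t)
variable (hno : ∀ x y : Fin d → ℕ, inGrid n d x → inGrid n d y →
      (∀ j : Fin d, j ≠ i → x j = y j) → vs d l u f x y ≤ 0)

include hno in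
lemma same_col_absurd {H L : Fin d → ℕ} (hH : inGrid n d H) (hL : inGrid n d L)
    (hcol : ∀ j : Fin d, j ≠ i → H j = L j)
    (hE : 0 < f H - f L - qm d l u H L) : False := by
  have h := hno H L hH hL hcol
  have h2 := le_vs (f := f) (l := l) (u := u) H L
  linarith

include hlu hno in
lemma core : ∀ (k : ℕ) (N C : Finset ((Fin d → ℕ) × (Fin d → ℕ))) (H L : Fin d → ℕ)
    (F0 : Finset (Fin d → ℕ)) (σ : Bool),
    (N \ C).card < k →
    IsMatching n d l u f N →
    (∀ p ∈ N, p.1 i = p.2 i) →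
    C ⊆ N →
    (∀ p ∈ C, 0 < f p.1 - f p.2 - qm d l u p.1 p.2) →
    (∀ p ∈ C, p.1 i = H i →
        (∃ q ∈ C, q.1 = Function.update p.2 i (L i) ∨ q.2 = Function.update p.2 i (L i)) ∨
        (σ = false ∧ Function.update p.2 i (L i) = L)) →
    (∀ p ∈ C, p.1 i = L i →
        (∃ q ∈ C, q.1 = Function.update p.1 i (H i) ∨ q.2 = Function.update p.1 i (H i)) ∨
        (σ = true ∧ Function.update p.1 i (H i) = H)) →
    inGrid n d H → inGrid n d L →
    ¬ used N H → ¬ used N L →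
    H ∉ F0 → L ∉ F0 →
    (∀ v ∈ F0, ¬ used N v) →
    H i ≠ L i →
    0 < f H - f L - qm d l u H L →
    ∃ N' : Finset ((Fin d → ℕ) × (Fin d → ℕ)),
      IsMatching n d l u f N' ∧ (∀ p ∈ N', p.1 i = p.2 i) ∧
      ((W l u f N + (f H - f L - qm d l u H L) ≤ W l u f N' ∧ ∀ v ∈ F0, ¬ used N' v)
       ∨ (∃ H' L' φ : Fin d → ℕ, φ ∈ F0 ∧
            inGrid n d H' ∧ inGrid n d L' ∧
            ¬ used N' H' ∧ ¬ used N' L' ∧ H' ∉ F0 ∧ L' ∉ F0 ∧ H' ≠ L' ∧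
            (∀ v ∈ F0, ¬ used N' v) ∧
            W l u f N + (f H - f L - qm d l u H L) ≤
              W l u f N' + (f H' - f φ - qm d l u H' φ) + (f φ - f L' - qm d l u φ L') ∧
            ((φ i = H' i ∧ 0 < f H' - f φ - qm d l u H' φ ∧ f φ - f L' - qm d l u φ L' ≤ 0)
             ∨ (φ i = L' i ∧ 0 < f φ - f L' - qm d l u φ L' ∧
                 f H' - f φ - qm d l u H' φ ≤ 0)))) := by
  intro k
  induction k with
  | zero => intro N C H L F0 σ hcard; omega
  | succ k IH =>
    intro N C H L F0 σ hcard hM hflat hCN hcert hinv2 hinv3 hH hL hfH hfL hHF hLF hF0 hne hE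
    rcases σ with _ | _
    · -- σ = false : B-step, lower H to the level of L
      have hπi : (Function.update H i (L i)) i = L i := Function.update_self i (L i) H
      set π := Function.update H i (L i) with hπdef
      have hπgrid : inGrid n d π := grid_update hH (hL i).1 (hL i).2
      have hπH : π ≠ H := fun h => hne (by rw [← hπi, h])
      have hHL : H ≠ L := fun h => hne (congrFun h i)
      have hπL : π ≠ L := by
        intro h
        apply same_col_absurd (f := f) hno hH hL ?_ hE
        intro j hj
        have hc := congrFun h j
        rw [hπdef, Function.update_of_ne hj] at hc
        exact hc
      have hδ : f H - f π ≤ qm d l u H π := line1 n l u f i hno hH (hL i).1 (hL i).2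
      have hdec : qm d l u H L = qm d l u H π + qm d l u π L := qm_dec2 H L
      have hbPos : 0 < f π - f L - qm d l u π L := by linarith
      by_cases hπF : π ∈ F0
      · -- merge return
        refine ⟨N, hM, hflat, Or.inr ⟨H, L, π, hπF, hH, hL, hfH, hfL, hHF, hLF, hHL, hF0,
          by linarith, Or.inr ⟨hπi, hbPos, by linarith⟩⟩⟩
      by_cases hπu : used N π
      swap
      · -- π free : terminal, add (π, L)
        have hnp : ((π, L) : (Fin d → ℕ) × (Fin d → ℕ)) ∉ N :=
          notMem_of_not_used (q := (π, L)) hπu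
        have hvsπL : 0 < vs d l u f π L :=
          lt_of_lt_of_le hbPos (le_vs (f := f) (l := l) (u := u) π L)
        refine ⟨insert (π, L) N,
          match_insert hM hπgrid hL hπL hvsπL hπu hfL, ?_, Or.inl ⟨?_, ?_⟩⟩
        · intro p hp
          rcases Finset.mem_insert.1 hp with rfl | hp
          · exact hπi
          · exact hflat p hp
        · rw [W_insert hnp]
          have := le_vs (f := f) (l := l) (u := u) π L
          linarith
        · intro v hv hv'
          rcases used_insert.1 hv' with h | h | h
          · exact hπF ((show π = v from h) ▸ hv)
          · exact hLF ((show L = v from h) ▸ hv)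
          · exact hF0 v hv h
      · -- π is matched in N
        obtain ⟨P, hPmem, hPπ⟩ := hπu
        have hPg := hM.1 P hPmem
        have hPd : P.1 ≠ P.2 := hPg.2.2.1
        obtain ⟨X, hPX⟩ : ∃ X, (P.1 = π ∧ P.2 = X) ∨ (P.1 = X ∧ P.2 = π) := by
          rcases hPπ with h | h
          · exact ⟨P.2, Or.inl ⟨h, rfl⟩⟩
          · exact ⟨P.1, Or.inr ⟨rfl, h⟩⟩
        have hXgrid : inGrid n d X := by
          rcases hPX with ⟨h1, h2⟩ | ⟨h1, h2⟩
          · exact h2 ▸ hPg.2.1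
          · exact h1 ▸ hPg.1
        have hXi : X i = L i := by
          have hfp := hflat P hPmem
          rcases hPX with ⟨h1, h2⟩ | ⟨h1, h2⟩
          · rw [h1, h2] at hfp; rw [← hfp, hπi]
          · rw [h1, h2] at hfp; rw [hfp, hπi]
        have hvsP : vs d l u f P.1 P.2 = vs d l u f π X := by
          rcases hPX with ⟨h1, h2⟩ | ⟨h1, h2⟩
          · rw [h1, h2]
          · rw [h1, h2, vs_comm]
        have hXπ : X ≠ π := by
          rcases hPX with ⟨h1, h2⟩ | ⟨h1, h2⟩
          · exact fun h => hPd (h1.trans (h2.trans h).symm)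
          · exact fun h => hPd ((h1.trans h).trans h2.symm)
        have hXL : X ≠ L := by
          intro h
          apply hfL
          refine ⟨P, hPmem, ?_⟩
          rcases hPX with ⟨h1, h2⟩ | ⟨h1, h2⟩
          · exact Or.inr (h2.trans h)
          · exact Or.inl (h1.trans h)
        have hXH : X ≠ H := fun h => hne (by rw [← h, hXi])
        have hπer : ¬ used (N.erase P) π := by
          apply used_erase hM hPmem
          rcases hPX with ⟨h1, _⟩ | ⟨_, h2⟩
          · exact Or.inl h1
          · exact Or.inr h2
        have hXer : ¬ used (N.erase P) X := by
          apply used_erase hM hPmem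
          rcases hPX with ⟨_, h2⟩ | ⟨h1, _⟩
          · exact Or.inr h2
          · exact Or.inl h1
        have hHer : ¬ used (N.erase P) H :=
          fun h => hfH (used_mono (Finset.erase_subset _ _) h)
        have hLer : ¬ used (N.erase P) L :=
          fun h => hfL (used_mono (Finset.erase_subset _ _) h)
        have hXF0 : X ∉ F0 := by
          intro h
          apply hF0 X h
          refine ⟨P, hPmem, ?_⟩
          rcases hPX with ⟨_, h2⟩ | ⟨h1, _⟩
          · exact Or.inr h2
          · exact Or.inl h1
        by_cases hG1 : f π - f X - qm d l u π X ≤ f X - f π - qm d l u X π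
        · -- G1 : terminal, replace P by (X, L)
          have hvsPval : vs d l u f π X = f X - f π - qm d l u X π := max_eq_right hG1
          have htri : qm d l u X L ≤ qm d l u X π + qm d l u π L :=
            qm_triangle hlu hXgrid hL hπgrid
          have hPpos : 0 < vs d l u f P.1 P.2 := hPg.2.2.2
          have hvsXL : 0 < vs d l u f X L := by
            have h1 := le_vs (f := f) (l := l) (u := u) X L
            rw [hvsP, hvsPval] at hPpos
            linarith
          have hnp : ((X, L) : (Fin d → ℕ) × (Fin d → ℕ)) ∉ N.erase P :=
            notMem_of_not_used (q := (X, L)) hXer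
          refine ⟨insert (X, L) (N.erase P),
            match_insert (match_subset (Finset.erase_subset _ _) hM) hXgrid hL
              hXL hvsXL hXer hLer, ?_, Or.inl ⟨?_, ?_⟩⟩
          · intro p hp
            rcases Finset.mem_insert.1 hp with rfl | hp
            · exact hXi
            · exact hflat p (Finset.mem_of_mem_erase hp)
          · rw [W_insert hnp]
            have hWe := W_erase (l := l) (u := u) (f := f) hPmem
            have h1 := le_vs (f := f) (l := l) (u := u) X L
            rw [hvsP, hvsPval] at hWe
            linarith
          · intro v hv hv'
            rcases used_insert.1 hv' with h | h | h
            · exact hF0 v hv ((show X = v from h) ▸ ⟨P, hPmem, by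
                rcases hPX with ⟨_, h2⟩ | ⟨h1, _⟩
                · exact Or.inr h2
                · exact Or.inl h1⟩)
            · exact hLF ((show L = v from h) ▸ hv)
            · exact hF0 v hv (used_mono (Finset.erase_subset _ _) h)
        · -- G2 : π dominates its partner X
          push_neg at hG1
          have hvsPval : vs d l u f π X = f π - f X - qm d l u π X :=
            max_eq_left (le_of_lt hG1)
          have hPC : P ∉ C := by
            intro hPC
            rcases hPX with ⟨h1, h2⟩ | ⟨h1, h2⟩
            · -- P = (π, X) : the invariant forbids this
              have hcl := hinv3 P hPC (by rw [h1]; exact hπi)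
              rcases hcl with ⟨q, hqC, hqv⟩ | ⟨hfalse, _⟩
              · have hupd : Function.update P.1 i (H i) = H := by
                  rw [h1, hπdef, update_update]
                rw [hupd] at hqv
                exact hfH ⟨q, hCN hqC, hqv⟩
              · simp at hfalse
            · -- P = (X, π) : orientation contradiction with the certificate
              have hc := hcert P hPC
              rw [h1, h2] at hc
              have := other_nonpos (n := n) hlu hXgrid hπgrid hc
              linarith
          have hdecX : qm d l u H X = qm d l u H π + qm d l u π X := by
            have h := qm_dec2 (l := l) (u := u) (i := i) H X
            rwa [show Function.update H i (X i) = π by rw [hXi]] at h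
          have hnp : ((π, L) : (Fin d → ℕ) × (Fin d → ℕ)) ∉ N.erase P :=
            notMem_of_not_used (q := (π, L)) hπer
          have hvsπL : 0 < vs d l u f π L :=
            lt_of_lt_of_le hbPos (le_vs (f := f) (l := l) (u := u) π L)
          have hM2 : IsMatching n d l u f (insert (π, L) (N.erase P)) :=
            match_insert (match_subset (Finset.erase_subset _ _) hM) hπgrid hL
              hπL hvsπL hπer hLer
          have hflat2 : ∀ p ∈ insert (π, L) (N.erase P), p.1 i = p.2 i := by
            intro p hp
            rcases Finset.mem_insert.1 hp with rfl | hp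
            · exact hπi
            · exact hflat p (Finset.mem_of_mem_erase hp)
          have hWe := W_erase (l := l) (u := u) (f := f) hPmem
          have hW2 : W l u f (insert (π, L) (N.erase P)) =
              vs d l u f π L + W l u f (N.erase P) := W_insert hnp
          by_cases heN : f H - f X - qm d l u H X ≤ 0
          · -- terminal : keep (π, L), drop the virtual pair at X
            refine ⟨insert (π, L) (N.erase P), hM2, hflat2, Or.inl ⟨?_, ?_⟩⟩
            · have h1 := le_vs (f := f) (l := l) (u := u) π L
              rw [hvsP, hvsPval] at hWe
              rw [hW2]
              linarith
            · intro v hv hv'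
              rcases used_insert.1 hv' with h | h | h
              · exact hπF ((show π = v from h) ▸ hv)
              · exact hLF ((show L = v from h) ▸ hv)
              · exact hF0 v hv (used_mono (Finset.erase_subset _ _) h)
          · -- recurse with the virtual pair (H, X)
            push_neg at heN
            have hnpN : ((π, L) : (Fin d → ℕ) × (Fin d → ℕ)) ∉ N :=
              notMem_of_not_used' (q := (π, L)) hfL
            have hPNC : P ∈ N \ C := Finset.mem_sdiff.2 ⟨hPmem, hPC⟩
            have hsd : (insert (π, L) (N.erase P)) \ (insert (π, L) C) = (N \ C).erase P := by
              ext q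
              simp only [Finset.mem_sdiff, Finset.mem_insert, Finset.mem_erase, not_or]
              constructor
              · rintro ⟨hq1 | ⟨hq1, hq2⟩, hq3, hq4⟩
                · exact absurd hq1 hq3
                · exact ⟨hq1, hq2, hq4⟩
              · rintro ⟨hq1, hq2, hq3⟩
                exact ⟨Or.inr ⟨hq1, hq2⟩, fun h => hnpN (h ▸ hq2), hq3⟩
            have hcard2 : ((insert (π, L) (N.erase P)) \ (insert (π, L) C)).card < k := by
              rw [hsd]
              have h1 := Finset.card_erase_of_mem hPNC
              have h2 : 0 < (N \ C).card := Finset.card_pos.2 ⟨P, hPNC⟩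
              omega
            have hC2 : insert (π, L) C ⊆ insert (π, L) (N.erase P) := by
              intro q hq
              rcases Finset.mem_insert.1 hq with rfl | hq
              · exact Finset.mem_insert_self _ _
              · exact Finset.mem_insert_of_mem
                  (Finset.mem_erase.2 ⟨fun h => hPC (h ▸ hq), hCN hq⟩)
            have hcert2 : ∀ p ∈ insert (π, L) C, 0 < f p.1 - f p.2 - qm d l u p.1 p.2 := by
              intro p hp
              rcases Finset.mem_insert.1 hp with rfl | hp
              · exact hbPos
              · exact hcert p hp
            have hinv2' : ∀ p ∈ insert (π, L) C, p.1 i = H i →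
                (∃ q ∈ insert (π, L) C, q.1 = Function.update p.2 i (X i) ∨
                  q.2 = Function.update p.2 i (X i)) ∨
                (true = false ∧ Function.update p.2 i (X i) = X) := by
              intro p hp hpi
              rcases Finset.mem_insert.1 hp with rfl | hp
              · exact absurd ((show π i = H i from hpi).symm.trans hπi) hne
              · rcases hinv2 p hp hpi with ⟨q, hqC, hqv⟩ | ⟨_, hq2⟩
                · rw [show Function.update p.2 i (X i) = Function.update p.2 i (L i) by
                    rw [hXi]]
                  exact Or.inl ⟨q, Finset.mem_insert_of_mem hqC, hqv⟩
                · refine Or.inl ⟨(π, L), Finset.mem_insert_self _ _, Or.inr ?_⟩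
                  rw [show Function.update p.2 i (X i) = Function.update p.2 i (L i) by
                    rw [hXi]]
                  exact hq2.symm
            have hinv3' : ∀ p ∈ insert (π, L) C, p.1 i = X i →
                (∃ q ∈ insert (π, L) C, q.1 = Function.update p.1 i (H i) ∨
                  q.2 = Function.update p.1 i (H i)) ∨
                (true = true ∧ Function.update p.1 i (H i) = H) := by
              intro p hp hpi
              rcases Finset.mem_insert.1 hp with rfl | hp
              · exact Or.inr ⟨rfl, by rw [hπdef, update_update]⟩
              · rcases hinv3 p hp (by rw [hpi, hXi]) with ⟨q, hqC, hqv⟩ | ⟨hfalse, _⟩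
                · exact Or.inl ⟨q, Finset.mem_insert_of_mem hqC, hqv⟩
                · simp at hfalse
            have hfH2 : ¬ used (insert (π, L) (N.erase P)) H := by
              intro h
              rcases used_insert.1 h with h | h | h
              · exact hπH h
              · exact hHL h.symm
              · exact hHer h
            have hfX2 : ¬ used (insert (π, L) (N.erase P)) X := by
              intro h
              rcases used_insert.1 h with h | h | h
              · exact hXπ h.symm
              · exact hXL h.symm
              · exact hXer h
            have hF02 : ∀ v ∈ F0, ¬ used (insert (π, L) (N.erase P)) v := by
              intro v hv h
              rcases used_insert.1 h with h | h | h
              · exact hπF ((show π = v from h) ▸ hv)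
              · exact hLF ((show L = v from h) ▸ hv)
              · exact hF0 v hv (used_mono (Finset.erase_subset _ _) h)
            obtain ⟨N3, hM3, hflat3, hres⟩ := IH (insert (π, L) (N.erase P)) (insert (π, L) C)
              H X F0 true hcard2 hM2 hflat2 hC2 hcert2 hinv2' hinv3' hH hXgrid hfH2 hfX2
              hHF hXF0 hF02 (fun h => hne (by rw [h, hXi])) heN
            have hkey : W l u f N + (f H - f L - qm d l u H L) ≤
                W l u f (insert (π, L) (N.erase P)) + (f H - f X - qm d l u H X) := by
              have h1 := le_vs (f := f) (l := l) (u := u) π L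
              rw [hvsP, hvsPval] at hWe
              rw [hW2]
              linarith
            rcases hres with ⟨hW3, hF03⟩ | ⟨H', L', φ, hφ, hg1, hg2, hu1, hu2, hnF1, hnF2,
              hne', hF03, hsum, hside⟩
            · exact ⟨N3, hM3, hflat3, Or.inl ⟨by linarith, hF03⟩⟩
            · exact ⟨N3, hM3, hflat3, Or.inr ⟨H', L', φ, hφ, hg1, hg2, hu1, hu2, hnF1, hnF2,
                hne', hF03, by linarith, hside⟩⟩
    · -- σ = true : A-step, lift L to the level of H
      have hπi : (Function.update L i (H i)) i = H i := Function.update_self i (H i) L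
      set π := Function.update L i (H i) with hπdef
      have hπgrid : inGrid n d π := grid_update hL (hH i).1 (hH i).2
      have hπL : π ≠ L := fun h => hne (by rw [← hπi, h])
      have hHL : H ≠ L := fun h => hne (congrFun h i)
      have hπH : π ≠ H := by
        intro h
        apply same_col_absurd (f := f) hno hH hL ?_ hE
        intro j hj
        have hc := congrFun h j
        rw [hπdef, Function.update_of_ne hj] at hc
        exact hc.symm
      have hδ : f π - f L ≤ qm d l u π L := line2 n l u f i hno hL (hH i).1 (hH i).2
      have hdec : qm d l u H L = qm d l u H π + qm d l u π L := qm_dec1 H L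
      have haPos : 0 < f H - f π - qm d l u H π := by linarith
      by_cases hπF : π ∈ F0
      · -- merge return
        refine ⟨N, hM, hflat, Or.inr ⟨H, L, π, hπF, hH, hL, hfH, hfL, hHF, hLF, hHL, hF0,
          by linarith, Or.inl ⟨hπi, haPos, by linarith⟩⟩⟩
      by_cases hπu : used N π
      swap
      · -- π free : terminal, add (H, π)
        have hnp : ((H, π) : (Fin d → ℕ) × (Fin d → ℕ)) ∉ N :=
          notMem_of_not_used (q := (H, π)) hfH
        have hvsHπ : 0 < vs d l u f H π :=
          lt_of_lt_of_le haPos (le_vs (f := f) (l := l) (u := u) H π)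
        refine ⟨insert (H, π) N,
          match_insert hM hH hπgrid (Ne.symm hπH) hvsHπ hfH hπu, ?_, Or.inl ⟨?_, ?_⟩⟩
        · intro p hp
          rcases Finset.mem_insert.1 hp with rfl | hp
          · exact hπi.symm
          · exact hflat p hp
        · rw [W_insert hnp]
          have := le_vs (f := f) (l := l) (u := u) H π
          linarith
        · intro v hv hv'
          rcases used_insert.1 hv' with h | h | h
          · exact hHF ((show H = v from h) ▸ hv)
          · exact hπF ((show π = v from h) ▸ hv)
          · exact hF0 v hv h
      · -- π is matched in N
        obtain ⟨P, hPmem, hPπ⟩ := hπu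
        have hPg := hM.1 P hPmem
        have hPd : P.1 ≠ P.2 := hPg.2.2.1
        obtain ⟨X, hPX⟩ : ∃ X, (P.1 = π ∧ P.2 = X) ∨ (P.1 = X ∧ P.2 = π) := by
          rcases hPπ with h | h
          · exact ⟨P.2, Or.inl ⟨h, rfl⟩⟩
          · exact ⟨P.1, Or.inr ⟨rfl, h⟩⟩
        have hXgrid : inGrid n d X := by
          rcases hPX with ⟨h1, h2⟩ | ⟨h1, h2⟩
          · exact h2 ▸ hPg.2.1
          · exact h1 ▸ hPg.1
        have hXi : X i = H i := by
          have hfp := hflat P hPmem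
          rcases hPX with ⟨h1, h2⟩ | ⟨h1, h2⟩
          · rw [h1, h2] at hfp; rw [← hfp, hπi]
          · rw [h1, h2] at hfp; rw [hfp, hπi]
        have hvsP : vs d l u f P.1 P.2 = vs d l u f π X := by
          rcases hPX with ⟨h1, h2⟩ | ⟨h1, h2⟩
          · rw [h1, h2]
          · rw [h1, h2, vs_comm]
        have hXπ : X ≠ π := by
          rcases hPX with ⟨h1, h2⟩ | ⟨h1, h2⟩
          · exact fun h => hPd (h1.trans (h2.trans h).symm)
          · exact fun h => hPd ((h1.trans h).trans h2.symm)
        have hXH : X ≠ H := by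
          intro h
          apply hfH
          refine ⟨P, hPmem, ?_⟩
          rcases hPX with ⟨h1, h2⟩ | ⟨h1, h2⟩
          · exact Or.inr (h2.trans h)
          · exact Or.inl (h1.trans h)
        have hXL : X ≠ L := fun h => hne (by rw [← hXi, h])
        have hπer : ¬ used (N.erase P) π := by
          apply used_erase hM hPmem
          rcases hPX with ⟨h1, _⟩ | ⟨_, h2⟩
          · exact Or.inl h1
          · exact Or.inr h2
        have hXer : ¬ used (N.erase P) X := by
          apply used_erase hM hPmem
          rcases hPX with ⟨_, h2⟩ | ⟨h1, _⟩
          · exact Or.inr h2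
          · exact Or.inl h1
        have hHer : ¬ used (N.erase P) H :=
          fun h => hfH (used_mono (Finset.erase_subset _ _) h)
        have hLer : ¬ used (N.erase P) L :=
          fun h => hfL (used_mono (Finset.erase_subset _ _) h)
        have hXF0 : X ∉ F0 := by
          intro h
          apply hF0 X h
          refine ⟨P, hPmem, ?_⟩
          rcases hPX with ⟨_, h2⟩ | ⟨h1, _⟩
          · exact Or.inr h2
          · exact Or.inl h1
        have hπF0used : used N π := ⟨P, hPmem, by
          rcases hPX with ⟨h1, _⟩ | ⟨_, h2⟩
          · exact Or.inl h1
          · exact Or.inr h2⟩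
        by_cases hG1 : f X - f π - qm d l u X π ≤ f π - f X - qm d l u π X
        · -- G1 : terminal, replace P by (H, X)
          have hvsPval : vs d l u f π X = f π - f X - qm d l u π X := max_eq_left hG1
          have htri : qm d l u H X ≤ qm d l u H π + qm d l u π X :=
            qm_triangle hlu hH hXgrid hπgrid
          have hPpos : 0 < vs d l u f P.1 P.2 := hPg.2.2.2
          have hvsHX : 0 < vs d l u f H X := by
            have h1 := le_vs (f := f) (l := l) (u := u) H X
            rw [hvsP, hvsPval] at hPpos
            linarith
          have hnp : ((H, X) : (Fin d → ℕ) × (Fin d → ℕ)) ∉ N.erase P :=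
            notMem_of_not_used (q := (H, X)) hHer
          refine ⟨insert (H, X) (N.erase P),
            match_insert (match_subset (Finset.erase_subset _ _) hM) hH hXgrid
              (Ne.symm hXH) hvsHX hHer hXer, ?_, Or.inl ⟨?_, ?_⟩⟩
          · intro p hp
            rcases Finset.mem_insert.1 hp with rfl | hp
            · exact hXi.symm
            · exact hflat p (Finset.mem_of_mem_erase hp)
          · rw [W_insert hnp]
            have hWe := W_erase (l := l) (u := u) (f := f) hPmem
            have h1 := le_vs (f := f) (l := l) (u := u) H X
            rw [hvsP, hvsPval] at hWe
            linarith
          · intro v hv hv'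
            rcases used_insert.1 hv' with h | h | h
            · exact hHF ((show H = v from h) ▸ hv)
            · exact hF0 v hv ((show X = v from h) ▸ ⟨P, hPmem, by
                rcases hPX with ⟨_, h2⟩ | ⟨h1, _⟩
                · exact Or.inr h2
                · exact Or.inl h1⟩)
            · exact hF0 v hv (used_mono (Finset.erase_subset _ _) h)
        · -- G2 : the partner X dominates
          push_neg at hG1
          have hvsPval : vs d l u f π X = f X - f π - qm d l u X π :=
            max_eq_right (le_of_lt hG1)
          have hPC : P ∉ C := by
            intro hPC
            rcases hPX with ⟨h1, h2⟩ | ⟨h1, h2⟩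
            · -- P = (π, X) : orientation contradiction with the certificate
              have hc := hcert P hPC
              rw [h1, h2] at hc
              have := other_nonpos (n := n) hlu hπgrid hXgrid hc
              linarith
            · -- P = (X, π) : the invariant forbids this
              have hcl := hinv2 P hPC (by rw [h1]; exact hXi)
              rcases hcl with ⟨q, hqC, hqv⟩ | ⟨hfalse, _⟩
              · have hupd : Function.update P.2 i (L i) = L := by
                  rw [h2, hπdef, update_update]
                rw [hupd] at hqv
                exact hfL ⟨q, hCN hqC, hqv⟩
              · simp at hfalse
          have hdecX : qm d l u X L = qm d l u X π + qm d l u π L := by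
            have h := qm_dec1 (l := l) (u := u) (i := i) X L
            rwa [show Function.update L i (X i) = π by rw [hXi]] at h
          have hnp : ((H, π) : (Fin d → ℕ) × (Fin d → ℕ)) ∉ N.erase P :=
            notMem_of_not_used (q := (H, π)) hHer
          have hvsHπ : 0 < vs d l u f H π :=
            lt_of_lt_of_le haPos (le_vs (f := f) (l := l) (u := u) H π)
          have hM2 : IsMatching n d l u f (insert (H, π) (N.erase P)) :=
            match_insert (match_subset (Finset.erase_subset _ _) hM) hH hπgrid
              (Ne.symm hπH) hvsHπ hHer hπer
          have hflat2 : ∀ p ∈ insert (H, π) (N.erase P), p.1 i = p.2 i := by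
            intro p hp
            rcases Finset.mem_insert.1 hp with rfl | hp
            · exact hπi.symm
            · exact hflat p (Finset.mem_of_mem_erase hp)
          have hWe := W_erase (l := l) (u := u) (f := f) hPmem
          have hW2 : W l u f (insert (H, π) (N.erase P)) =
              vs d l u f H π + W l u f (N.erase P) := W_insert hnp
          by_cases heN : f X - f L - qm d l u X L ≤ 0
          · -- terminal : keep (H, π), drop the virtual pair at X
            refine ⟨insert (H, π) (N.erase P), hM2, hflat2, Or.inl ⟨?_, ?_⟩⟩
            · have h1 := le_vs (f := f) (l := l) (u := u) H π
              rw [hvsP, hvsPval] at hWe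
              rw [hW2]
              linarith
            · intro v hv hv'
              rcases used_insert.1 hv' with h | h | h
              · exact hHF ((show H = v from h) ▸ hv)
              · exact hπF ((show π = v from h) ▸ hv)
              · exact hF0 v hv (used_mono (Finset.erase_subset _ _) h)
          · -- recurse with the virtual pair (X, L)
            push_neg at heN
            have hnpN : ((H, π) : (Fin d → ℕ) × (Fin d → ℕ)) ∉ N :=
              notMem_of_not_used (q := (H, π)) hfH
            have hPNC : P ∈ N \ C := Finset.mem_sdiff.2 ⟨hPmem, hPC⟩
            have hsd : (insert (H, π) (N.erase P)) \ (insert (H, π) C) = (N \ C).erase P := by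
              ext q
              simp only [Finset.mem_sdiff, Finset.mem_insert, Finset.mem_erase, not_or]
              constructor
              · rintro ⟨hq1 | ⟨hq1, hq2⟩, hq3, hq4⟩
                · exact absurd hq1 hq3
                · exact ⟨hq1, hq2, hq4⟩
              · rintro ⟨hq1, hq2, hq3⟩
                exact ⟨Or.inr ⟨hq1, hq2⟩, fun h => hnpN (h ▸ hq2), hq3⟩
            have hcard2 : ((insert (H, π) (N.erase P)) \ (insert (H, π) C)).card < k := by
              rw [hsd]
              have h1 := Finset.card_erase_of_mem hPNC
              have h2 : 0 < (N \ C).card := Finset.card_pos.2 ⟨P, hPNC⟩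
              omega
            have hC2 : insert (H, π) C ⊆ insert (H, π) (N.erase P) := by
              intro q hq
              rcases Finset.mem_insert.1 hq with rfl | hq
              · exact Finset.mem_insert_self _ _
              · exact Finset.mem_insert_of_mem
                  (Finset.mem_erase.2 ⟨fun h => hPC (h ▸ hq), hCN hq⟩)
            have hcert2 : ∀ p ∈ insert (H, π) C, 0 < f p.1 - f p.2 - qm d l u p.1 p.2 := by
              intro p hp
              rcases Finset.mem_insert.1 hp with rfl | hp
              · exact haPos
              · exact hcert p hp
            have hinv2' : ∀ p ∈ insert (H, π) C, p.1 i = X i →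
                (∃ q ∈ insert (H, π) C, q.1 = Function.update p.2 i (L i) ∨
                  q.2 = Function.update p.2 i (L i)) ∨
                (false = false ∧ Function.update p.2 i (L i) = L) := by
              intro p hp hpi
              rcases Finset.mem_insert.1 hp with rfl | hp
              · exact Or.inr ⟨rfl, by rw [hπdef, update_update]⟩
              · rcases hinv2 p hp (by rw [hpi, hXi]) with ⟨q, hqC, hqv⟩ | ⟨hfalse, _⟩
                · exact Or.inl ⟨q, Finset.mem_insert_of_mem hqC, hqv⟩
                · simp at hfalse
            have hinv3' : ∀ p ∈ insert (H, π) C, p.1 i = L i →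
                (∃ q ∈ insert (H, π) C, q.1 = Function.update p.1 i (X i) ∨
                  q.2 = Function.update p.1 i (X i)) ∨
                (false = true ∧ Function.update p.1 i (X i) = X) := by
              intro p hp hpi
              rcases Finset.mem_insert.1 hp with rfl | hp
              · exact absurd hpi hne
              · rcases hinv3 p hp hpi with ⟨q, hqC, hqv⟩ | ⟨_, hq2⟩
                · rw [show Function.update p.1 i (X i) = Function.update p.1 i (H i) by
                    rw [hXi]]
                  exact Or.inl ⟨q, Finset.mem_insert_of_mem hqC, hqv⟩
                · refine Or.inl ⟨(H, π), Finset.mem_insert_self _ _, Or.inl ?_⟩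
                  rw [show Function.update p.1 i (X i) = Function.update p.1 i (H i) by
                    rw [hXi]]
                  exact hq2.symm
            have hfX2 : ¬ used (insert (H, π) (N.erase P)) X := by
              intro h
              rcases used_insert.1 h with h | h | h
              · exact hXH h.symm
              · exact hXπ h.symm
              · exact hXer h
            have hfL2 : ¬ used (insert (H, π) (N.erase P)) L := by
              intro h
              rcases used_insert.1 h with h | h | h
              · exact hHL h
              · exact hπL h
              · exact hLer h
            have hF02 : ∀ v ∈ F0, ¬ used (insert (H, π) (N.erase P)) v := by
              intro v hv h
              rcases used_insert.1 h with h | h | h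
              · exact hHF ((show H = v from h) ▸ hv)
              · exact hπF ((show π = v from h) ▸ hv)
              · exact hF0 v hv (used_mono (Finset.erase_subset _ _) h)
            obtain ⟨N3, hM3, hflat3, hres⟩ := IH (insert (H, π) (N.erase P)) (insert (H, π) C)
              X L F0 false hcard2 hM2 hflat2 hC2 hcert2 hinv2' hinv3' hXgrid hL hfX2 hfL2
              hXF0 hLF hF02 (by rw [hXi]; exact hne) heN
            have hkey : W l u f N + (f H - f L - qm d l u H L) ≤
                W l u f (insert (H, π) (N.erase P)) + (f X - f L - qm d l u X L) := by
              have h1 := le_vs (f := f) (l := l) (u := u) H π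
              rw [hvsP, hvsPval] at hWe
              rw [hW2]
              linarith
            rcases hres with ⟨hW3, hF03⟩ | ⟨H', L', φ, hφ, hg1, hg2, hu1, hu2, hnF1, hnF2,
              hne', hF03, hsum, hside⟩
            · exact ⟨N3, hM3, hflat3, Or.inl ⟨by linarith, hF03⟩⟩
            · exact ⟨N3, hM3, hflat3, Or.inr ⟨H', L', φ, hφ, hg1, hg2, hu1, hu2, hnF1, hnF2,
                hne', hF03, by linarith, hside⟩⟩

include hlu hno in
lemma multi : ∀ (k : ℕ) (VS N : Finset ((Fin d → ℕ) × (Fin d → ℕ))),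
    VS.card < k →
    IsMatching n d l u f N →
    (∀ p ∈ N, p.1 i = p.2 i) →
    (∀ q ∈ VS, inGrid n d q.1 ∧ inGrid n d q.2 ∧ q.1 ≠ q.2 ∧
      0 < f q.1 - f q.2 - qm d l u q.1 q.2 ∧ ¬ used N q.1 ∧ ¬ used N q.2) →
    (∀ q ∈ VS, ∀ q' ∈ VS, q ≠ q' → q.1 ≠ q'.1 ∧ q.1 ≠ q'.2 ∧ q.2 ≠ q'.1 ∧ q.2 ≠ q'.2) →
    ∃ N', IsMatching n d l u f N' ∧ (∀ p ∈ N', p.1 i = p.2 i) ∧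
      W l u f N + (∑ q ∈ VS, (f q.1 - f q.2 - qm d l u q.1 q.2)) ≤ W l u f N' := by
  intro k
  induction k with
  | zero => intro VS N hcard; omega
  | succ k IH =>
    intro VS N hcard hM hflat hVS hdisj
    rcases Finset.eq_empty_or_nonempty VS with rfl | ⟨q0, hq0⟩
    · exact ⟨N, hM, hflat, by simp⟩
    · obtain ⟨hg1, hg2, hq0ne, hq0E, hq0f1, hq0f2⟩ := hVS q0 hq0
      have hsplit : ∑ q ∈ VS, (f q.1 - f q.2 - qm d l u q.1 q.2) =
          (f q0.1 - f q0.2 - qm d l u q0.1 q0.2) +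
          ∑ q ∈ VS.erase q0, (f q.1 - f q.2 - qm d l u q.1 q.2) :=
        (Finset.add_sum_erase _ _ hq0).symm
      have hVS' : ∀ q ∈ VS.erase q0, inGrid n d q.1 ∧ inGrid n d q.2 ∧ q.1 ≠ q.2 ∧
          0 < f q.1 - f q.2 - qm d l u q.1 q.2 ∧ ¬ used N q.1 ∧ ¬ used N q.2 :=
        fun q hq => hVS q (Finset.mem_of_mem_erase hq)
      have hdisj' : ∀ q ∈ VS.erase q0, ∀ q' ∈ VS.erase q0, q ≠ q' →
          q.1 ≠ q'.1 ∧ q.1 ≠ q'.2 ∧ q.2 ≠ q'.1 ∧ q.2 ≠ q'.2 :=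
        fun q hq q' hq' h => hdisj q (Finset.mem_of_mem_erase hq) q'
          (Finset.mem_of_mem_erase hq') h
      have hcard' : (VS.erase q0).card < k := by
        have h1 := Finset.card_erase_of_mem hq0
        have h2 : 0 < VS.card := Finset.card_pos.2 ⟨q0, hq0⟩
        omega
      by_cases hfl : q0.1 i = q0.2 i
      · -- flat virtual pair : insert it directly
        have hvq : 0 < vs d l u f q0.1 q0.2 :=
          lt_of_lt_of_le hq0E (le_vs (f := f) (l := l) (u := u) q0.1 q0.2)
        have hq0N : q0 ∉ N := notMem_of_not_used hq0f1
        have hM2 : IsMatching n d l u f (insert q0 N) :=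
          match_insert hM hg1 hg2 hq0ne hvq hq0f1 hq0f2
        have hflat2 : ∀ p ∈ insert q0 N, p.1 i = p.2 i := by
          intro p hp
          rcases Finset.mem_insert.1 hp with rfl | hp
          · exact hfl
          · exact hflat p hp
        have hVS2 : ∀ q ∈ VS.erase q0, inGrid n d q.1 ∧ inGrid n d q.2 ∧ q.1 ≠ q.2 ∧
            0 < f q.1 - f q.2 - qm d l u q.1 q.2 ∧
            ¬ used (insert q0 N) q.1 ∧ ¬ used (insert q0 N) q.2 := by
          intro q hq
          have hqVS := Finset.mem_of_mem_erase hq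
          have hqd := hdisj q0 hq0 q hqVS (fun h => Finset.ne_of_mem_erase hq h.symm)
          obtain ⟨a1, a2, a3, a4, a5, a6⟩ := hVS q hqVS
          refine ⟨a1, a2, a3, a4, ?_, ?_⟩
          · intro h
            rcases used_insert.1 h with h | h | h
            · exact hqd.1 h
            · exact hqd.2.2.1 h
            · exact a5 h
          · intro h
            rcases used_insert.1 h with h | h | h
            · exact hqd.2.1 h
            · exact hqd.2.2.2 h
            · exact a6 h
        obtain ⟨N', hM', hflat', hW'⟩ := IH (VS.erase q0) (insert q0 N) hcard' hM2 hflat2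
          hVS2 hdisj'
        refine ⟨N', hM', hflat', ?_⟩
        rw [hsplit]
        rw [W_insert hq0N] at hW'
        have := le_vs (f := f) (l := l) (u := u) q0.1 q0.2
        linarith
      · -- cross virtual pair : run the core process
        set F0 : Finset (Fin d → ℕ) :=
          (VS.erase q0).image Prod.fst ∪ (VS.erase q0).image Prod.snd with hF0def
        have hF0mem : ∀ v, v ∈ F0 ↔ ∃ q ∈ VS.erase q0, q.1 = v ∨ q.2 = v := by
          intro v
          simp only [hF0def, Finset.mem_union, Finset.mem_image]
          constructor
          · rintro (⟨q, hq, rfl⟩ | ⟨q, hq, rfl⟩)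
            · exact ⟨q, hq, Or.inl rfl⟩
            · exact ⟨q, hq, Or.inr rfl⟩
          · rintro ⟨q, hq, h | h⟩
            · exact Or.inl ⟨q, hq, h⟩
            · exact Or.inr ⟨q, hq, h⟩
        have hH0F : q0.1 ∉ F0 := by
          intro h
          obtain ⟨q, hq, hv⟩ := (hF0mem _).1 h
          have hqd := hdisj q0 hq0 q (Finset.mem_of_mem_erase hq)
            (fun h' => Finset.ne_of_mem_erase hq h'.symm)
          rcases hv with h' | h'
          · exact hqd.1 h'.symm
          · exact hqd.2.1 h'.symm
        have hL0F : q0.2 ∉ F0 := by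
          intro h
          obtain ⟨q, hq, hv⟩ := (hF0mem _).1 h
          have hqd := hdisj q0 hq0 q (Finset.mem_of_mem_erase hq)
            (fun h' => Finset.ne_of_mem_erase hq h'.symm)
          rcases hv with h' | h'
          · exact hqd.2.2.1 h'.symm
          · exact hqd.2.2.2 h'.symm
        have hF0free : ∀ v ∈ F0, ¬ used N v := by
          intro v hv
          obtain ⟨q, hq, hv'⟩ := (hF0mem _).1 hv
          obtain ⟨_, _, _, _, a5, a6⟩ := hVS' q hq
          rcases hv' with h | h
          · exact h ▸ a5
          · exact h ▸ a6
        obtain ⟨N1, hM1, hflat1, hres⟩ := core hlu hno (N.card + 1) N ∅ q0.1 q0.2 F0 true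
          (by
            have := Finset.card_le_card (Finset.sdiff_subset (s := N) (t := (∅ : Finset _)))
            omega)
          hM hflat (Finset.empty_subset _) (by simp) (by simp) (by simp)
          hg1 hg2 hq0f1 hq0f2 hH0F hL0F hF0free hfl hq0E
        rcases hres with ⟨hW1, hF0un⟩ | ⟨H', L', φ, hφ, hg1', hg2', hu1, hu2, hnF1, hnF2,
          hne', hF0un, hsum, hside⟩
        · -- complete : continue with the rest
          have hVS2 : ∀ q ∈ VS.erase q0, inGrid n d q.1 ∧ inGrid n d q.2 ∧ q.1 ≠ q.2 ∧
              0 < f q.1 - f q.2 - qm d l u q.1 q.2 ∧ ¬ used N1 q.1 ∧ ¬ used N1 q.2 := by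
            intro q hq
            obtain ⟨a1, a2, a3, a4, _, _⟩ := hVS' q hq
            exact ⟨a1, a2, a3, a4, hF0un _ ((hF0mem _).2 ⟨q, hq, Or.inl rfl⟩),
              hF0un _ ((hF0mem _).2 ⟨q, hq, Or.inr rfl⟩)⟩
          obtain ⟨N', hM', hflat', hW'⟩ := IH (VS.erase q0) N1 hcard' hM1 hflat1 hVS2 hdisj'
          refine ⟨N', hM', hflat', ?_⟩
          rw [hsplit]
          linarith
        · -- merge : a second virtual pair was absorbed
          obtain ⟨qm', hqm', hφv⟩ := (hF0mem _).1 hφ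
          have hqmVS := Finset.mem_of_mem_erase hqm'
          obtain ⟨b1, b2, b3, b4, _, _⟩ := hVS' qm' hqm'
          have hsplit2 : ∑ q ∈ VS.erase q0, (f q.1 - f q.2 - qm d l u q.1 q.2) =
              (f qm'.1 - f qm'.2 - qm d l u qm'.1 qm'.2) +
              ∑ q ∈ (VS.erase q0).erase qm', (f q.1 - f q.2 - qm d l u q.1 q.2) :=
            (Finset.add_sum_erase _ _ hqm').symm
          have hcard'' : ∀ P : (Fin d → ℕ) × (Fin d → ℕ),
              (insert P ((VS.erase q0).erase qm')).card < k := by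
            intro P
            have h1 := Finset.card_insert_le P ((VS.erase q0).erase qm')
            have h2 := Finset.card_erase_of_mem hqm'
            have h3 := Finset.card_erase_of_mem hq0
            have h4 : 0 < (VS.erase q0).card := Finset.card_pos.2 ⟨qm', hqm'⟩
            have h5 : 0 < VS.card := Finset.card_pos.2 ⟨q0, hq0⟩
            omega
          have hdisj'' : ∀ q ∈ (VS.erase q0).erase qm', ∀ q' ∈ (VS.erase q0).erase qm',
              q ≠ q' → q.1 ≠ q'.1 ∧ q.1 ≠ q'.2 ∧ q.2 ≠ q'.1 ∧ q.2 ≠ q'.2 :=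
            fun q hq q' hq' h => hdisj' q (Finset.mem_of_mem_erase hq) q'
              (Finset.mem_of_mem_erase hq') h
          have hrest : ∀ q ∈ (VS.erase q0).erase qm', inGrid n d q.1 ∧ inGrid n d q.2 ∧
              q.1 ≠ q.2 ∧ 0 < f q.1 - f q.2 - qm d l u q.1 q.2 ∧
              ¬ used N1 q.1 ∧ ¬ used N1 q.2 := by
            intro q hq
            have hq1 := Finset.mem_of_mem_erase hq
            obtain ⟨a1, a2, a3, a4, _, _⟩ := hVS' q hq1
            exact ⟨a1, a2, a3, a4, hF0un _ ((hF0mem _).2 ⟨q, hq1, Or.inl rfl⟩),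
              hF0un _ ((hF0mem _).2 ⟨q, hq1, Or.inr rfl⟩)⟩
          have hrestF : ∀ q ∈ (VS.erase q0).erase qm', ∀ v,
              (q.1 = v ∨ q.2 = v) → v ∈ F0 := by
            intro q hq v hv
            exact (hF0mem _).2 ⟨q, Finset.mem_of_mem_erase hq, hv⟩
          have hqmd : ∀ q ∈ (VS.erase q0).erase qm',
              q.1 ≠ qm'.1 ∧ q.1 ≠ qm'.2 ∧ q.2 ≠ qm'.1 ∧ q.2 ≠ qm'.2 := by
            intro q hq
            exact hdisj' q (Finset.mem_of_mem_erase hq) qm' hqm'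
              (Finset.ne_of_mem_erase hq)
          have hqm1F : qm'.1 ∈ F0 := (hF0mem _).2 ⟨qm', hqm', Or.inl rfl⟩
          have hqm2F : qm'.2 ∈ F0 := (hF0mem _).2 ⟨qm', hqm', Or.inr rfl⟩
          rcases hφv with hv | hv
          · -- φ is the high end of qm'
            subst hv
            have htr : qm d l u H' qm'.2 ≤ qm d l u H' qm'.1 + qm d l u qm'.1 qm'.2 :=
              qm_triangle hlu hg1' b2 b1
            have hPne : H' ≠ qm'.2 := fun h => hnF1 (h ▸ hqm2F)
            have hPne1 : H' ≠ qm'.1 := fun h => hnF1 (h ▸ hqm1F)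
            have hPnotin : ((H', qm'.2) : (Fin d → ℕ) × (Fin d → ℕ)) ∉
                (VS.erase q0).erase qm' := fun h => hnF1 (hrestF _ h H' (Or.inl rfl))
            have hsumP : ∑ q ∈ insert (H', qm'.2) ((VS.erase q0).erase qm'),
                (f q.1 - f q.2 - qm d l u q.1 q.2) =
                (f H' - f qm'.2 - qm d l u H' qm'.2) +
                ∑ q ∈ (VS.erase q0).erase qm', (f q.1 - f q.2 - qm d l u q.1 q.2) :=
              Finset.sum_insert hPnotin
            have hdisjP : ∀ q ∈ insert (H', qm'.2) ((VS.erase q0).erase qm'),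
                ∀ q' ∈ insert (H', qm'.2) ((VS.erase q0).erase qm'), q ≠ q' →
                q.1 ≠ q'.1 ∧ q.1 ≠ q'.2 ∧ q.2 ≠ q'.1 ∧ q.2 ≠ q'.2 := by
              intro q hq q' hq' hne''
              rcases Finset.mem_insert.1 hq with rfl | hq
              · rcases Finset.mem_insert.1 hq' with rfl | hq'
                · exact absurd rfl hne''
                · have hd := hqmd q' hq'
                  exact ⟨fun h => hnF1 (hrestF _ hq' _ (Or.inl (show q'.1 = H' from h.symm))),
                    fun h => hnF1 (hrestF _ hq' _ (Or.inr (show q'.2 = H' from h.symm))),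
                    hd.2.1.symm, hd.2.2.2.symm⟩
              · rcases Finset.mem_insert.1 hq' with rfl | hq'
                · have hd := hqmd q hq
                  exact ⟨fun h => hnF1 ((show q.1 = H' from h) ▸ hrestF _ hq _ (Or.inl rfl)),
                    hd.2.1,
                    fun h => hnF1 ((show q.2 = H' from h) ▸ hrestF _ hq _ (Or.inr rfl)),
                    hd.2.2.2⟩
                · exact hdisj'' q hq q' hq' hne''
            rcases hside with ⟨hφi, ha, hb⟩ | ⟨hφi, hb, ha⟩
            · -- A-side merge : new virtual pair (H', qm'.2), nothing added
              have hEnew : 0 < f H' - f qm'.2 - qm d l u H' qm'.2 := by linarith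
              have hVSP : ∀ q ∈ insert (H', qm'.2) ((VS.erase q0).erase qm'),
                  inGrid n d q.1 ∧ inGrid n d q.2 ∧ q.1 ≠ q.2 ∧
                  0 < f q.1 - f q.2 - qm d l u q.1 q.2 ∧
                  ¬ used N1 q.1 ∧ ¬ used N1 q.2 := by
                intro q hq
                rcases Finset.mem_insert.1 hq with rfl | hq
                · exact ⟨hg1', b2, hPne, hEnew, hu1, hF0un _ hqm2F⟩
                · exact hrest q hq
              obtain ⟨N', hM', hflat', hW'⟩ := IH _ N1 (hcard'' _) hM1 hflat1 hVSP hdisjP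
              refine ⟨N', hM', hflat', ?_⟩
              rw [hsplit, hsplit2]
              rw [hsumP] at hW'
              linarith
            · -- B-side merge : add (qm'.1, L'), new virtual pair (H', qm'.2)
              have hadne : qm'.1 ≠ L' := fun h => hnF2 (h ▸ hqm1F)
              have hadvs : 0 < vs d l u f qm'.1 L' :=
                lt_of_lt_of_le hb (le_vs (f := f) (l := l) (u := u) qm'.1 L')
              have hadnotin : ((qm'.1, L') : (Fin d → ℕ) × (Fin d → ℕ)) ∉ N1 :=
                notMem_of_not_used (q := (qm'.1, L')) (hF0un _ hqm1F)
              have hM2 : IsMatching n d l u f (insert (qm'.1, L') N1) :=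
                match_insert hM1 b1 hg2' hadne hadvs (hF0un _ hqm1F) hu2
              have hflat2 : ∀ p ∈ insert (qm'.1, L') N1, p.1 i = p.2 i := by
                intro p hp
                rcases Finset.mem_insert.1 hp with rfl | hp
                · exact hφi
                · exact hflat1 p hp
              have hW2 : W l u f (insert (qm'.1, L') N1) =
                  vs d l u f qm'.1 L' + W l u f N1 := W_insert hadnotin
              have hfree2 : ∀ v, v ≠ qm'.1 → v ≠ L' → ¬ used N1 v →
                  ¬ used (insert (qm'.1, L') N1) v := by
                intro v h1 h2 h3 h
                rcases used_insert.1 h with h | h | h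
                · exact h1 h.symm
                · exact h2 h.symm
                · exact h3 h
              by_cases hEp : 0 < f H' - f qm'.2 - qm d l u H' qm'.2
              · have hVSP : ∀ q ∈ insert (H', qm'.2) ((VS.erase q0).erase qm'),
                    inGrid n d q.1 ∧ inGrid n d q.2 ∧ q.1 ≠ q.2 ∧
                    0 < f q.1 - f q.2 - qm d l u q.1 q.2 ∧
                    ¬ used (insert (qm'.1, L') N1) q.1 ∧
                    ¬ used (insert (qm'.1, L') N1) q.2 := by
                  intro q hq
                  rcases Finset.mem_insert.1 hq with rfl | hq
                  · exact ⟨hg1', b2, hPne, hEp, hfree2 _ hPne1 hne' hu1,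
                      hfree2 _ (Ne.symm b3) (fun h => hnF2 ((show qm'.2 = L' from h) ▸ hqm2F)) (hF0un _ hqm2F)⟩
                  · obtain ⟨a1, a2, a3, a4, a5, a6⟩ := hrest q hq
                    have hd := hqmd q hq
                    exact ⟨a1, a2, a3, a4,
                      hfree2 _ hd.1 (fun h => hnF2 (h ▸ hrestF _ hq _ (Or.inl rfl))) a5,
                      hfree2 _ hd.2.2.1 (fun h => hnF2 (h ▸ hrestF _ hq _ (Or.inr rfl))) a6⟩
                obtain ⟨N', hM', hflat', hW'⟩ := IH _ _ (hcard'' _) hM2 hflat2 hVSP hdisjP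
                refine ⟨N', hM', hflat', ?_⟩
                rw [hsplit, hsplit2]
                rw [hsumP, hW2] at hW'
                have := le_vs (f := f) (l := l) (u := u) qm'.1 L'
                linarith
              · push_neg at hEp
                have hVSP : ∀ q ∈ (VS.erase q0).erase qm',
                    inGrid n d q.1 ∧ inGrid n d q.2 ∧ q.1 ≠ q.2 ∧
                    0 < f q.1 - f q.2 - qm d l u q.1 q.2 ∧
                    ¬ used (insert (qm'.1, L') N1) q.1 ∧
                    ¬ used (insert (qm'.1, L') N1) q.2 := by
                  intro q hq
                  obtain ⟨a1, a2, a3, a4, a5, a6⟩ := hrest q hq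
                  have hd := hqmd q hq
                  exact ⟨a1, a2, a3, a4,
                    hfree2 _ hd.1 (fun h => hnF2 (h ▸ hrestF _ hq _ (Or.inl rfl))) a5,
                    hfree2 _ hd.2.2.1 (fun h => hnF2 (h ▸ hrestF _ hq _ (Or.inr rfl))) a6⟩
                obtain ⟨N', hM', hflat', hW'⟩ := IH ((VS.erase q0).erase qm') _
                  (by
                    have h2 := Finset.card_erase_of_mem hqm'
                    have h3 := Finset.card_erase_of_mem hq0
                    have h5 : 0 < VS.card := Finset.card_pos.2 ⟨q0, hq0⟩
                    omega)
                  hM2 hflat2 hVSP hdisj''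
                refine ⟨N', hM', hflat', ?_⟩
                rw [hsplit, hsplit2]
                rw [hW2] at hW'
                have := le_vs (f := f) (l := l) (u := u) qm'.1 L'
                linarith
          · -- φ is the low end of qm'
            subst hv
            have htr : qm d l u qm'.1 L' ≤ qm d l u qm'.1 qm'.2 + qm d l u qm'.2 L' :=
              qm_triangle hlu b1 hg2' b2
            have hPne : qm'.1 ≠ L' := fun h => hnF2 (h ▸ hqm1F)
            have hPnotin : ((qm'.1, L') : (Fin d → ℕ) × (Fin d → ℕ)) ∉
                (VS.erase q0).erase qm' := fun h => hnF2 (hrestF _ h L' (Or.inr rfl))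
            have hsumP : ∑ q ∈ insert (qm'.1, L') ((VS.erase q0).erase qm'),
                (f q.1 - f q.2 - qm d l u q.1 q.2) =
                (f qm'.1 - f L' - qm d l u qm'.1 L') +
                ∑ q ∈ (VS.erase q0).erase qm', (f q.1 - f q.2 - qm d l u q.1 q.2) :=
              Finset.sum_insert hPnotin
            have hdisjP : ∀ q ∈ insert (qm'.1, L') ((VS.erase q0).erase qm'),
                ∀ q' ∈ insert (qm'.1, L') ((VS.erase q0).erase qm'), q ≠ q' →
                q.1 ≠ q'.1 ∧ q.1 ≠ q'.2 ∧ q.2 ≠ q'.1 ∧ q.2 ≠ q'.2 := by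
              intro q hq q' hq' hne''
              rcases Finset.mem_insert.1 hq with rfl | hq
              · rcases Finset.mem_insert.1 hq' with rfl | hq'
                · exact absurd rfl hne''
                · have hd := hqmd q' hq'
                  exact ⟨hd.1.symm, hd.2.2.1.symm,
                    fun h => hnF2 (hrestF _ hq' _ (Or.inl (show q'.1 = L' from h.symm))),
                    fun h => hnF2 (hrestF _ hq' _ (Or.inr (show q'.2 = L' from h.symm)))⟩
              · rcases Finset.mem_insert.1 hq' with rfl | hq'
                · have hd := hqmd q hq
                  exact ⟨hd.1,
                    fun h => hnF2 ((show q.1 = L' from h) ▸ hrestF _ hq _ (Or.inl rfl)),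
                    hd.2.2.1,
                    fun h => hnF2 ((show q.2 = L' from h) ▸ hrestF _ hq _ (Or.inr rfl))⟩
                · exact hdisj'' q hq q' hq' hne''
            rcases hside with ⟨hφi, ha, hb⟩ | ⟨hφi, hb, ha⟩
            · -- A-side merge : add (H', qm'.2), new virtual pair (qm'.1, L')
              have hadne : H' ≠ qm'.2 := fun h => hnF1 (h ▸ hqm2F)
              have hadvs : 0 < vs d l u f H' qm'.2 :=
                lt_of_lt_of_le ha (le_vs (f := f) (l := l) (u := u) H' qm'.2)
              have hadnotin : ((H', qm'.2) : (Fin d → ℕ) × (Fin d → ℕ)) ∉ N1 :=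
                notMem_of_not_used (q := (H', qm'.2)) hu1
              have hM2 : IsMatching n d l u f (insert (H', qm'.2) N1) :=
                match_insert hM1 hg1' b2 hadne hadvs hu1 (hF0un _ hqm2F)
              have hflat2 : ∀ p ∈ insert (H', qm'.2) N1, p.1 i = p.2 i := by
                intro p hp
                rcases Finset.mem_insert.1 hp with rfl | hp
                · exact hφi.symm
                · exact hflat1 p hp
              have hW2 : W l u f (insert (H', qm'.2) N1) =
                  vs d l u f H' qm'.2 + W l u f N1 := W_insert hadnotin
              have hfree2 : ∀ v, v ≠ H' → v ≠ qm'.2 → ¬ used N1 v →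
                  ¬ used (insert (H', qm'.2) N1) v := by
                intro v h1 h2 h3 h
                rcases used_insert.1 h with h | h | h
                · exact h1 h.symm
                · exact h2 h.symm
                · exact h3 h
              by_cases hEp : 0 < f qm'.1 - f L' - qm d l u qm'.1 L'
              · have hVSP : ∀ q ∈ insert (qm'.1, L') ((VS.erase q0).erase qm'),
                    inGrid n d q.1 ∧ inGrid n d q.2 ∧ q.1 ≠ q.2 ∧
                    0 < f q.1 - f q.2 - qm d l u q.1 q.2 ∧
                    ¬ used (insert (H', qm'.2) N1) q.1 ∧
                    ¬ used (insert (H', qm'.2) N1) q.2 := by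
                  intro q hq
                  rcases Finset.mem_insert.1 hq with rfl | hq
                  · exact ⟨b1, hg2', hPne, hEp,
                      hfree2 _ (fun h => hnF1 ((show qm'.1 = H' from h) ▸ hqm1F)) b3 (hF0un _ hqm1F),
                      hfree2 _ (Ne.symm hne') (fun h => hnF2 ((show L' = qm'.2 from h) ▸ hqm2F)) hu2⟩
                  · obtain ⟨a1, a2, a3, a4, a5, a6⟩ := hrest q hq
                    have hd := hqmd q hq
                    exact ⟨a1, a2, a3, a4,
                      hfree2 _ (fun h => hnF1 (h ▸ hrestF _ hq _ (Or.inl rfl))) hd.2.1 a5,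
                      hfree2 _ (fun h => hnF1 (h ▸ hrestF _ hq _ (Or.inr rfl))) hd.2.2.2 a6⟩
                obtain ⟨N', hM', hflat', hW'⟩ := IH _ _ (hcard'' _) hM2 hflat2 hVSP hdisjP
                refine ⟨N', hM', hflat', ?_⟩
                rw [hsplit, hsplit2]
                rw [hsumP, hW2] at hW'
                have := le_vs (f := f) (l := l) (u := u) H' qm'.2
                linarith
              · push_neg at hEp
                have hVSP : ∀ q ∈ (VS.erase q0).erase qm',
                    inGrid n d q.1 ∧ inGrid n d q.2 ∧ q.1 ≠ q.2 ∧
                    0 < f q.1 - f q.2 - qm d l u q.1 q.2 ∧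
                    ¬ used (insert (H', qm'.2) N1) q.1 ∧
                    ¬ used (insert (H', qm'.2) N1) q.2 := by
                  intro q hq
                  obtain ⟨a1, a2, a3, a4, a5, a6⟩ := hrest q hq
                  have hd := hqmd q hq
                  exact ⟨a1, a2, a3, a4,
                    hfree2 _ (fun h => hnF1 (h ▸ hrestF _ hq _ (Or.inl rfl))) hd.2.1 a5,
                    hfree2 _ (fun h => hnF1 (h ▸ hrestF _ hq _ (Or.inr rfl))) hd.2.2.2 a6⟩
                obtain ⟨N', hM', hflat', hW'⟩ := IH ((VS.erase q0).erase qm') _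
                  (by
                    have h2 := Finset.card_erase_of_mem hqm'
                    have h3 := Finset.card_erase_of_mem hq0
                    have h5 : 0 < VS.card := Finset.card_pos.2 ⟨q0, hq0⟩
                    omega)
                  hM2 hflat2 hVSP hdisj''
                refine ⟨N', hM', hflat', ?_⟩
                rw [hsplit, hsplit2]
                rw [hW2] at hW'
                have := le_vs (f := f) (l := l) (u := u) H' qm'.2
                linarith
            · -- B-side merge : new virtual pair (qm'.1, L'), nothing added
              have hEnew : 0 < f qm'.1 - f L' - qm d l u qm'.1 L' := by linarith
              have hVSP : ∀ q ∈ insert (qm'.1, L') ((VS.erase q0).erase qm'),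
                  inGrid n d q.1 ∧ inGrid n d q.2 ∧ q.1 ≠ q.2 ∧
                  0 < f q.1 - f q.2 - qm d l u q.1 q.2 ∧
                  ¬ used N1 q.1 ∧ ¬ used N1 q.2 := by
                intro q hq
                rcases Finset.mem_insert.1 hq with rfl | hq
                · exact ⟨b1, hg2', hPne, hEnew, hF0un _ hqm1F, hu2⟩
                · exact hrest q hq
              obtain ⟨N', hM', hflat', hW'⟩ := IH _ N1 (hcard'' _) hM1 hflat1 hVSP hdisjP
              refine ⟨N', hM', hflat', ?_⟩
              rw [hsplit, hsplit2]
              rw [hsumP] at hW'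
              linarith
  
include hlu hno in
/-- any matching is dominated by a matching with no `i`-cross pairs. -/
lemma claim (M : Finset ((Fin d → ℕ) × (Fin d → ℕ))) (hM : IsMatching n d l u f M) :
    ∃ N, IsMatching n d l u f N ∧ (∀ p ∈ N, p.1 i = p.2 i) ∧
      W l u f M ≤ W l u f N := by
  classical
  set NC := M.filter (fun p => p.1 i = p.2 i) with hNC
  set CR := M.filter (fun p => ¬ p.1 i = p.2 i) with hCR
  have hWsplit : W l u f M = W l u f NC + ∑ p ∈ CR, vs d l u f p.1 p.2 := by
    rw [W, W, hNC, hCR]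
    exact (Finset.sum_filter_add_sum_filter_not M _ _).symm
  set orient : ((Fin d → ℕ) × (Fin d → ℕ)) → ((Fin d → ℕ) × (Fin d → ℕ)) :=
    fun p => if f p.2 - f p.1 - qm d l u p.2 p.1 ≤ f p.1 - f p.2 - qm d l u p.1 p.2
      then p else (p.2, p.1) with horient
  have ho1 : ∀ p, (f p.2 - f p.1 - qm d l u p.2 p.1 ≤ f p.1 - f p.2 - qm d l u p.1 p.2) →
      orient p = p := fun p h => by simp only [horient]; exact if_pos h
  have ho2 : ∀ p, ¬(f p.2 - f p.1 - qm d l u p.2 p.1 ≤ f p.1 - f p.2 - qm d l u p.1 p.2) →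
      orient p = (p.2, p.1) := fun p h => by simp only [horient]; exact if_neg h
  have horient_vs : ∀ p, f (orient p).1 - f (orient p).2 - qm d l u (orient p).1 (orient p).2
      = vs d l u f p.1 p.2 := by
    intro p
    by_cases h : f p.2 - f p.1 - qm d l u p.2 p.1 ≤ f p.1 - f p.2 - qm d l u p.1 p.2
    · rw [ho1 p h]
      exact (max_eq_left h).symm
    · rw [ho2 p h]
      exact (max_eq_right (le_of_not_ge h)).symm
  have horient_comp : ∀ p, ((orient p).1 = p.1 ∧ (orient p).2 = p.2) ∨
      ((orient p).1 = p.2 ∧ (orient p).2 = p.1) := by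
    intro p
    by_cases h : f p.2 - f p.1 - qm d l u p.2 p.1 ≤ f p.1 - f p.2 - qm d l u p.1 p.2
    · rw [ho1 p h]; exact Or.inl ⟨rfl, rfl⟩
    · rw [ho2 p h]; exact Or.inr ⟨rfl, rfl⟩
  have hinj : ∀ p ∈ CR, ∀ p' ∈ CR, orient p = orient p' → p = p' := by
    intro p hp p' hp' hEq
    by_contra hne
    have hd := hM.2 p (Finset.mem_of_mem_filter p hp) p' (Finset.mem_of_mem_filter p' hp') hne
    rcases horient_comp p with ⟨e1, e2⟩ | ⟨e1, e2⟩ <;>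
      rcases horient_comp p' with ⟨e1', e2'⟩ | ⟨e1', e2'⟩
    · exact hd.1 (by rw [← e1, ← e1', hEq])
    · exact hd.2.1 (by rw [← e1, ← e1', hEq])
    · exact hd.2.2.1 (by rw [← e1, ← e1', hEq])
    · exact hd.1 (by rw [← e2, ← e2', hEq])
  set VS := CR.image orient with hVS
  have hsumVS : ∑ q ∈ VS, (f q.1 - f q.2 - qm d l u q.1 q.2) =
      ∑ p ∈ CR, vs d l u f p.1 p.2 := by
    rw [hVS, Finset.sum_image hinj]
    exact Finset.sum_congr rfl fun p _ => horient_vs p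
  have hMnc : IsMatching n d l u f NC := match_subset (Finset.filter_subset _ _) hM
  have hflatNC : ∀ p ∈ NC, p.1 i = p.2 i := fun p hp => (Finset.mem_filter.1 hp).2
  have hVSmem : ∀ q ∈ VS, ∃ p ∈ CR, orient p = q := fun q hq => by
    obtain ⟨p, hp, hpq⟩ := Finset.mem_image.1 hq
    exact ⟨p, hp, hpq⟩
  have hVScond : ∀ q ∈ VS, inGrid n d q.1 ∧ inGrid n d q.2 ∧ q.1 ≠ q.2 ∧
      0 < f q.1 - f q.2 - qm d l u q.1 q.2 ∧ ¬ used NC q.1 ∧ ¬ used NC q.2 := by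
    intro q hq
    obtain ⟨p, hp, rfl⟩ := hVSmem q hq
    have hpM := Finset.mem_of_mem_filter p hp
    have hpg := hM.1 p hpM
    have hpcr : ¬ p.1 i = p.2 i := (Finset.mem_filter.1 hp).2
    have hfree : ∀ v, (p.1 = v ∨ p.2 = v) → ¬ used NC v := by
      rintro v hv ⟨p', hp', hv'⟩
      have hp'M := Finset.mem_of_mem_filter p' hp'
      have hp'ne : p ≠ p' := by
        rintro rfl
        exact hpcr ((Finset.mem_filter.1 hp').2)
      have hd := hM.2 p hpM p' hp'M hp'ne
      rcases hv with h | h <;> rcases hv' with h' | h'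
      · exact hd.1 (h.trans h'.symm)
      · exact hd.2.1 (h.trans h'.symm)
      · exact hd.2.2.1 (h.trans h'.symm)
      · exact hd.2.2.2 (h.trans h'.symm)
    have hpos : 0 < f (orient p).1 - f (orient p).2 -
        qm d l u (orient p).1 (orient p).2 := by
      rw [horient_vs p]; exact hpg.2.2.2
    rcases horient_comp p with ⟨e1, e2⟩ | ⟨e1, e2⟩
    · exact ⟨e1 ▸ hpg.1, e2 ▸ hpg.2.1, fun h => hpg.2.2.1 (by rw [← e1, ← e2, h]), hpos,
        by rw [e1]; exact hfree _ (Or.inl rfl), by rw [e2]; exact hfree _ (Or.inr rfl)⟩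
    · exact ⟨e1 ▸ hpg.2.1, e2 ▸ hpg.1, fun h => hpg.2.2.1 (by rw [← e1, ← e2, h.symm]), hpos,
        by rw [e1]; exact hfree _ (Or.inr rfl), by rw [e2]; exact hfree _ (Or.inl rfl)⟩
  have hVSdisj : ∀ q ∈ VS, ∀ q' ∈ VS, q ≠ q' →
      q.1 ≠ q'.1 ∧ q.1 ≠ q'.2 ∧ q.2 ≠ q'.1 ∧ q.2 ≠ q'.2 := by
    intro q hq q' hq' hne
    obtain ⟨p, hp, rfl⟩ := hVSmem q hq
    obtain ⟨p', hp', rfl⟩ := hVSmem q' hq'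
    have hpne : p ≠ p' := fun h => hne (by rw [h])
    have hd := hM.2 p (Finset.mem_of_mem_filter p hp) p' (Finset.mem_of_mem_filter p' hp') hpne
    rcases horient_comp p with ⟨e1, e2⟩ | ⟨e1, e2⟩ <;>
      rcases horient_comp p' with ⟨e1', e2'⟩ | ⟨e1', e2'⟩
    · rw [e1, e2, e1', e2']; exact hd
    · rw [e1, e2, e1', e2']; exact ⟨hd.2.1, hd.1, hd.2.2.2, hd.2.2.1⟩
    · rw [e1, e2, e1', e2']; exact ⟨hd.2.2.1, hd.2.2.2, hd.1, hd.2.1⟩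
    · rw [e1, e2, e1', e2']; exact ⟨hd.2.2.2, hd.2.2.1, hd.2.1, hd.1⟩
  obtain ⟨N, hN, hNflat, hWN⟩ := multi hlu hno (VS.card + 1) VS NC (by omega) hMnc hflatNC
    hVScond hVSdisj
  exact ⟨N, hN, hNflat, by rw [hWsplit, ← hsumVS]; linarith⟩

end core

end S12

/-- if there are no violations along the `i`-lines, then some
maximum weight matching of `G_f` has no `i`-cross pairs. -/


theorem stmt12 (n d : ℕ) (hn : 2 ≤ n) (hd : 1 ≤ d)
    (l u : Fin d → ℕ → ℝ)
    (hlu : ∀ r : Fin d, ∀ t : ℕ, 1 ≤ t → t + 1 ≤ n → l r t < u r t)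
    (f : (Fin d → ℕ) → ℝ) (i : Fin d)
    (hno : ∀ x y : Fin d → ℕ, inGrid n d x → inGrid n d y →
      (∀ j : Fin d, j ≠ i → x j = y j) → vs d l u f x y ≤ 0) :
    ∃ M : Finset ((Fin d → ℕ) × (Fin d → ℕ)),
      IsMatching n d l u f M ∧
      (∀ p ∈ M, p.1 i = p.2 i) ∧
      IsGreatest {s : ℝ | ∃ M' : Finset ((Fin d → ℕ) × (Fin d → ℕ)),
          IsMatching n d l u f M' ∧ s = ∑ p ∈ M', vs d l u f p.1 p.2}
        (∑ p ∈ M, vs d l u f p.1 p.2) := by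
  classical
  set G : Finset (Fin d → ℕ) := Fintype.piFinset (fun _ : Fin d => Finset.Icc 1 n) with hG
  have hGmem : ∀ x : Fin d → ℕ, x ∈ G ↔ inGrid n d x := by
    intro x
    rw [hG, Fintype.mem_piFinset]
    constructor
    · intro h r; exact Finset.mem_Icc.1 (h r)
    · intro h r; exact Finset.mem_Icc.2 (h r)
  set T := (G ×ˢ G).powerset.filter (fun M => IsMatching n d l u f M) with hT
  have hTne : T.Nonempty := ⟨∅, by
    rw [hT, Finset.mem_filter]
    exact ⟨Finset.mem_powerset.2 (Finset.empty_subset _),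
      ⟨fun p hp => absurd hp (Finset.notMem_empty p),
       fun p hp => absurd hp (Finset.notMem_empty p)⟩⟩⟩
  obtain ⟨M0, hM0T, hM0max⟩ := Finset.exists_max_image T (S12.W l u f) hTne
  have hM0 : IsMatching n d l u f M0 := (Finset.mem_filter.1 hM0T).2
  have hmemT : ∀ M', IsMatching n d l u f M' → M' ∈ T := by
    intro M' hM'
    rw [hT, Finset.mem_filter]
    refine ⟨Finset.mem_powerset.2 ?_, hM'⟩
    intro p hp
    have h := hM'.1 p hp
    exact Finset.mem_product.2 ⟨(hGmem p.1).2 h.1, (hGmem p.2).2 h.2.1⟩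
  obtain ⟨N, hN, hNflat, hWN⟩ := S12.claim hlu hno M0 hM0
  refine ⟨N, hN, hNflat, ⟨N, hN, rfl⟩, ?_⟩
  rintro s ⟨M', hM', rfl⟩
  exact le_trans (hM0max M' (hmemT M' hM')) hWN
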